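/- Let p ≥ 13 be a prime with p ≡ 1 (mod 4). Then the sequence of Legendre symbols ((n/p))_{1≤n≤p-1} is not equal to the sequence (a_{p,l}(n))_{1≤n≤p-1} for any even integer l with 0 ≤ l ≤ p-3. -/

import Mathlib

open Finset in
private lemma sum_shift' {p : ℕ} [Fact p.Prime] (hp2 : p ≠ 2) (b : ZMod p) (hb : b ≠ 0) :
    ∑ x : ZMod p, quadraticChar (ZMod p) x * quadraticChar (ZMod p) (x + b) = -1 := by
  have hchar : ringChar (ZMod p) ≠ 2 := by
    rw [ZMod.ringChar_zmod_n]; exact hp2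
  have h0 : ∑ x : ZMod p, quadraticChar (ZMod p) x * quadraticChar (ZMod p) (x + b)
      = ∑ x ∈ univ.erase (0 : ZMod p), quadraticChar (ZMod p) x * quadraticChar (ZMod p) (x + b) := by
    rw [← Finset.sum_erase_add _ _ (mem_univ (0 : ZMod p))]
    simp
  rw [h0]
  have h1 : ∀ x ∈ univ.erase (0 : ZMod p),
      quadraticChar (ZMod p) x * quadraticChar (ZMod p) (x + b)
        = quadraticChar (ZMod p) (1 + b * x⁻¹) := by
    intro x hx
    have hx0 : x ≠ 0 := (Finset.mem_erase.mp hx).1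
    have : x + b = x * (1 + b * x⁻¹) := by field_simp
    rw [this, map_mul, ← mul_assoc, ← map_mul]
    rw [show x * x = x ^ 2 by ring, quadraticChar_sq_one' hx0, one_mul]
  rw [Finset.sum_congr rfl h1]
  have h2 : ∑ x ∈ univ.erase (0 : ZMod p), quadraticChar (ZMod p) (1 + b * x⁻¹)
      = ∑ y ∈ univ.erase (1 : ZMod p), quadraticChar (ZMod p) y := by
    apply Finset.sum_nbij' (fun x => 1 + b * x⁻¹) (fun y => b * (y - 1)⁻¹)
    · intro x hx
      have hx0 : x ≠ 0 := (Finset.mem_erase.mp hx).1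
      simp only [mem_erase, mem_univ, and_true]
      intro h
      have : b * x⁻¹ = 0 := by linear_combination h
      rcases mul_eq_zero.mp this with h' | h'
      · exact hb h'
      · exact hx0 (inv_eq_zero.mp h')
    · intro y hy
      have hy1 : y ≠ 1 := (Finset.mem_erase.mp hy).1
      simp only [mem_erase, mem_univ, and_true]
      intro h
      rcases mul_eq_zero.mp h with h' | h'
      · exact hb h'
      · exact hy1 (by have := inv_eq_zero.mp h'; linear_combination this)
    · intro x hx
      have hx0 : x ≠ 0 := (Finset.mem_erase.mp hx).1
      have hbx : b * x⁻¹ ≠ 0 := mul_ne_zero hb (inv_ne_zero hx0)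
      field_simp
      rw [add_sub_cancel_left, div_self hb]
    · intro y hy
      have hy1 : y ≠ 1 := (Finset.mem_erase.mp hy).1
      have : y - 1 ≠ 0 := sub_ne_zero.mpr hy1
      field_simp
      ring
    · intro x hx; rfl
  rw [h2]
  have h3 := quadraticChar_sum_zero hchar
  have := Finset.sum_erase_add univ (fun y => quadraticChar (ZMod p) y) (mem_univ (1 : ZMod p))
  simp only [map_one] at this
  linarith [this, h3]

private lemma Lcongr {p : ℕ} [Fact p.Prime] {a b : ℤ} (h : ((a : ZMod p)) = (b : ZMod p)) :
    legendreSym p a = legendreSym p b := by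
  unfold legendreSym; rw [h]

/-- The defining conditions of the sequence (a_{p,l}(n))_{1 ≤ n ≤ p-1}. -/
def IsA (p l : ℕ) (a : ℕ → ℤ) : Prop :=
  (∀ n : ℕ, 1 ≤ n → n ≤ p - 1 → a n = 1 ∨ a n = -1) ∧
  a 1 = 1 ∧
  (∀ n : ℕ, 1 ≤ n → n ≤ (p - 1) / 2 → a n = a (p - n)) ∧
  (∀ n : ℕ, 1 ≤ n → n ≤ l / 2 → a n = - a (l + 1 - n)) ∧
  (∀ n : ℕ, 1 ≤ n → n ≤ p - l - 2 → a n = a (l + 1 + n))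

theorem stmt13 (p : ℕ) [Fact p.Prime] (hp : 13 ≤ p) (hp4 : p % 4 = 1) :
    ∀ l : ℕ, Even l → l ≤ p - 3 → ∀ a : ℕ → ℤ, IsA p l a →
      ∃ n : ℕ, 1 ≤ n ∧ n ≤ p - 1 ∧ legendreSym p (n : ℤ) ≠ a n := by
  intro l hl hlp a ha
  by_contra hcon
  push_neg at hcon
  obtain ⟨ha1, ha2, ha3, ha4, ha5⟩ := ha
  have hle : l % 2 = 0 := Nat.even_iff.mp hl
  have hp2 : p ≠ 2 := by omega
  have hlp' : l + 3 ≤ p := by omega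
  -- legendre = a on the range
  have hL : ∀ n : ℕ, 1 ≤ n → n ≤ p - 1 → legendreSym p (n : ℤ) = a n := hcon
  have hsq : ∀ n : ℕ, 1 ≤ n → n ≤ p - 1 → a n * a n = 1 := by
    intro n h1 h2
    rcases ha1 n h1 h2 with h | h <;> rw [h] <;> norm_num
  -- extended antisymmetry
  have hflip : ∀ k : ℕ, 1 ≤ k → k ≤ l → a k = - a (l + 1 - k) := by
    intro k h1 h2
    rcases le_or_gt k (l / 2) with h | h
    · exact ha4 k h1 h
    · have h1' : 1 ≤ l + 1 - k := by omega
      have h2' : l + 1 - k ≤ l / 2 := by omega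
      have := ha4 (l + 1 - k) h1' h2'
      rw [show l + 1 - (l + 1 - k) = k by omega] at this
      linarith
  -- the character sum
  have hb0 : ((l + 1 : ℕ) : ZMod p) ≠ 0 := by
    rw [Ne, ZMod.natCast_eq_zero_iff]
    intro hdvd
    have := Nat.le_of_dvd (by omega) hdvd
    omega
  have hsumZ := sum_shift' hp2 ((l + 1 : ℕ) : ZMod p) hb0
  have htrans : ∑ n ∈ Finset.range p,
      (legendreSym p (n : ℤ) * legendreSym p ((n + (l + 1) : ℕ) : ℤ)) = -1 := by
    rw [← hsumZ]
    apply Finset.sum_nbij' (fun n => ((n : ℕ) : ZMod p)) (fun x => x.val)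
    · intro x hx; exact Finset.mem_univ _
    · intro x hx; exact Finset.mem_range.mpr (ZMod.val_lt x)
    · intro n hn
      exact ZMod.val_natCast_of_lt (Finset.mem_range.mp hn)
    · intro x hx
      exact ZMod.natCast_rightInverse x
    · intro n hn
      unfold legendreSym
      push_cast
      ring
  -- evaluate the sum termwise
  set f : ℕ → ℤ := fun n => legendreSym p (n : ℤ) * legendreSym p ((n + (l + 1) : ℕ) : ℤ) with hf
  have hterm1 : ∀ n ∈ Finset.Ico 1 (p - l - 1), f n = 1 := by
    intro n hn
    obtain ⟨h1, h2⟩ := Finset.mem_Ico.mp hn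
    have hb1 : n ≤ p - 1 := by omega
    have hb2 : l + 1 + n ≤ p - 1 := by omega
    have e1 : f n = a n * a (l + 1 + n) := by
      rw [hf]
      simp only
      rw [hL n h1 hb1, show n + (l + 1) = l + 1 + n by ring, hL (l + 1 + n) (by omega) hb2]
    rw [e1, ← ha5 n h1 (by omega), hsq n h1 hb1]
  have hterm0 : f (p - l - 1) = 0 := by
    rw [hf]
    simp only
    have : (p - l - 1) + (l + 1) = p := by omega
    rw [this]
    have : legendreSym p ((p : ℕ) : ℤ) = 0 := by
      rw [legendreSym.eq_zero_iff]
      push_cast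
      exact ZMod.natCast_self p
    rw [this, mul_zero]
  have hterm2 : ∀ n ∈ Finset.Ico (p - l) p, f n = -1 := by
    intro n hn
    obtain ⟨h1, h2⟩ := Finset.mem_Ico.mp hn
    set k : ℕ := p - n with hk
    have hk1 : 1 ≤ k := by omega
    have hk2 : k ≤ l := by omega
    -- first factor
    have e1 : legendreSym p (n : ℤ) = a k := by
      have : legendreSym p (n : ℤ) = legendreSym p ((-1) * (k : ℤ)) := by
        apply Lcongr
        have hnk : (n : ℤ) = (p : ℤ) + (-1) * (k : ℤ) := by
          have : n + k = p := by omega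
          push_cast [← this]; ring
        rw [hnk]
        push_cast [ZMod.natCast_self]
        ring
      rw [this, legendreSym.mul, legendreSym.at_neg_one hp2, ZMod.χ₄_nat_one_mod_four hp4,
        one_mul]
      exact hL k hk1 (by omega)
    -- second factor
    have e2 : legendreSym p ((n + (l + 1) : ℕ) : ℤ) = a (l + 1 - k) := by
      have : legendreSym p ((n + (l + 1) : ℕ) : ℤ) = legendreSym p ((l + 1 - k : ℕ) : ℤ) := by
        apply Lcongr
        have hnat : (n + (l + 1)) = p + (l + 1 - k) := by omega
        rw [hnat]
        push_cast [ZMod.natCast_self]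
        ring
      rw [this]
      exact hL (l + 1 - k) (by omega) (by omega)
    rw [hf]
    simp only
    rw [e1, e2, hflip k hk1 hk2]
    have := hsq (l + 1 - k) (by omega) (by omega)
    linarith
  -- total sum
  have hsplit : ∑ n ∈ Finset.range p, f n
      = f 0 + ((∑ n ∈ Finset.Ico 1 (p - l - 1), f n)
        + (f (p - l - 1) + ∑ n ∈ Finset.Ico (p - l) p, f n)) := by
    rw [Finset.range_eq_Ico]
    rw [← Finset.sum_Ico_consecutive f (by omega : (0:ℕ) ≤ 1) (by omega : 1 ≤ p)]
    rw [← Finset.sum_Ico_consecutive f (by omega : (1:ℕ) ≤ p - l - 1) (by omega : p - l - 1 ≤ p)]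
    rw [← Finset.sum_Ico_consecutive f (by omega : p - l - 1 ≤ p - l) (by omega : p - l ≤ p)]
    congr 1
    · rw [Finset.sum_Ico_eq_sum_range]
      simp
    · congr 2
      rw [Finset.sum_Ico_eq_sum_range]
      simp [show p - l - (p - l - 1) = 1 by omega]
  have hf0 : f 0 = 0 := by
    rw [hf]; simp
  have hS1 : ∑ n ∈ Finset.Ico 1 (p - l - 1), f n = (p - l - 2 : ℕ) := by
    rw [Finset.sum_congr rfl hterm1, Finset.sum_const, Nat.card_Ico]
    simp [show p - l - 1 - 1 = p - l - 2 by omega]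
  have hS2 : ∑ n ∈ Finset.Ico (p - l) p, f n = -(l : ℤ) := by
    rw [Finset.sum_congr rfl hterm2, Finset.sum_const, Nat.card_Ico]
    simp [show p - (p - l) = l by omega]
  rw [hsplit, hf0, hS1, hterm0, hS2] at htrans
  -- deduce p = 2l+1
  have hpl : p = 2 * l + 1 := by omega
  -- final contradiction using small values
  have hl6 : 6 ≤ l := by omega
  have hOdd : ∀ j : ℕ, 1 ≤ j → j ≤ l / 2 →
      legendreSym p (2 * (j : ℤ)) = - legendreSym p (2 * (j : ℤ) - 1) := by
    intro j h1 h2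
    have hjl : j ≤ p - 1 := by omega
    have e1 : legendreSym p (2 * (j : ℤ)) = legendreSym p 2 * legendreSym p (j : ℤ) :=
      legendreSym.mul p 2 (j : ℤ)
    have e2 : legendreSym p ((j : ℕ) : ℤ) = - legendreSym p ((l + 1 - j : ℕ) : ℤ) := by
      rw [hL j h1 hjl, hL (l + 1 - j) (by omega) (by omega)]
      exact ha4 j h1 h2
    have e3 : legendreSym p 2 * legendreSym p ((l + 1 - j : ℕ) : ℤ)
        = legendreSym p (2 * ((l + 1 - j : ℕ) : ℤ)) := (legendreSym.mul p 2 _).symm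
    have e4 : legendreSym p (2 * ((l + 1 - j : ℕ) : ℤ))
        = legendreSym p ((-1) * (2 * (j : ℤ) - 1)) := by
      apply Lcongr
      have hcast : ((l + 1 - j : ℕ) : ℤ) = (l : ℤ) + 1 - j := by
        have : j ≤ l + 1 := by omega
        push_cast [this]; ring
      rw [hcast]
      have : 2 * ((l : ℤ) + 1 - j) = (p : ℤ) + (-1) * (2 * (j : ℤ) - 1) := by
        have : (p : ℤ) = 2 * l + 1 := by exact_mod_cast congrArg (Nat.cast : ℕ → ℤ) hpl
        rw [this]; ring
      rw [this]
      push_cast [ZMod.natCast_self]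
      ring
    have e5 : legendreSym p ((-1) * (2 * (j : ℤ) - 1))
        = legendreSym p (2 * (j : ℤ) - 1) := by
      rw [legendreSym.mul, legendreSym.at_neg_one hp2, ZMod.χ₄_nat_one_mod_four hp4, one_mul]
    rw [e1, e2, mul_neg, e3, e4, e5]
  have hEven : ∀ n : ℕ, 1 ≤ n → n ≤ l - 1 →
      legendreSym p (2 * (n : ℤ) + 1) = legendreSym p (2 * (n : ℤ)) := by
    intro n h1 h2
    have e1 : legendreSym p (2 * (n : ℤ) + 1) = legendreSym p (2 * ((l + 1 + n : ℕ) : ℤ)) := by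
      apply Lcongr
      have : 2 * ((l + 1 + n : ℕ) : ℤ) = (p : ℤ) + (2 * (n : ℤ) + 1) := by
        have hpz : (p : ℤ) = 2 * l + 1 := by exact_mod_cast congrArg (Nat.cast : ℕ → ℤ) hpl
        push_cast
        rw [hpz]; ring
      rw [this]
      push_cast [ZMod.natCast_self]
      ring
    have e2 : legendreSym p (2 * ((l + 1 + n : ℕ) : ℤ))
        = legendreSym p 2 * legendreSym p ((l + 1 + n : ℕ) : ℤ) := legendreSym.mul p 2 _
    have e3 : legendreSym p ((l + 1 + n : ℕ) : ℤ) = legendreSym p ((n : ℕ) : ℤ) := by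
      rw [hL (l + 1 + n) (by omega) (by omega), hL n h1 (by omega)]
      exact (ha5 n h1 (by omega)).symm
    rw [e1, e2, e3, ← legendreSym.mul]
  -- compute the small values
  have L1 : legendreSym p (1 : ℤ) = 1 := legendreSym.at_one p
  have L2 : legendreSym p (2 : ℤ) = -1 := by
    have := hOdd 1 le_rfl (by omega)
    norm_num at this
    exact this
  have L3 : legendreSym p (3 : ℤ) = -1 := by
    have := hEven 1 le_rfl (by omega)
    norm_num at this
    rw [this, L2]
  have L4 : legendreSym p (4 : ℤ) = 1 := by
    have := hOdd 2 (by omega) (by omega)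
    norm_num at this
    rw [this, L3]; norm_num
  have L5 : legendreSym p (5 : ℤ) = 1 := by
    have := hEven 2 (by omega) (by omega)
    norm_num at this
    rw [this, L4]
  have L6 : legendreSym p (6 : ℤ) = -1 := by
    have := hOdd 3 (by omega) (by omega)
    norm_num at this
    rw [this, L5]
  have L6' : legendreSym p (6 : ℤ) = 1 := by
    rw [show (6 : ℤ) = 2 * 3 by norm_num, legendreSym.mul, L2, L3]
    norm_num
  rw [L6'] at L6
  norm_num at L6
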